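/- Let G be a finite bipartite multigraph (no loops), let k ≥ 0, and let i be an integer with 0 ≤ i ≤ k. Then 2·ν_k(G) ≥ ν_{k−i}(G) + ν_{k+i}(G), i.e., ν_k(G) ≥ (ν_{k−i}(G) + ν_{k+i}(G))/2. -/

import Mathlib

open Finset

open Finset

section KonigLR

variable {E ι₁ ι₂ : Type*} [DecidableEq E] [DecidableEq ι₁] [DecidableEq ι₂]

set_option maxHeartbeats 1000000 in
lemma konigCover [Fintype ι₁] [Fintype ι₂] (L : E → ι₁) (R : E → ι₂) (A : Finset E) (k : ℕ)
    (hk : 0 < k)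
    (hL : ∀ x, (A.filter fun e => L e = x).card ≤ k)
    (hR : ∀ y, (A.filter fun e => R e = y).card ≤ k) :
    ∃ M ⊆ A, (∀ e₁ ∈ M, ∀ e₂ ∈ M, e₁ ≠ e₂ → L e₁ ≠ L e₂ ∧ R e₁ ≠ R e₂) ∧
      (∀ x, (A.filter fun e => L e = x).card = k → ∃ e ∈ M, L e = x) ∧
      (∀ y, (A.filter fun e => R e = y).card = k → ∃ e ∈ M, R e = y) := by
  classical
  let deg2 : ι₁ ⊕ ι₂ → ℕ := Sum.elim (fun x => (A.filter fun e => L e = x).card)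
    (fun y => (A.filter fun e => R e = y).card)
  let E2 := (E × Bool) ⊕ ((ι₁ ⊕ ι₂) × ℕ)
  let L2 : E2 → ι₁ ⊕ ι₂ := fun e' =>
    match e' with
    | .inl (e, false) => .inl (L e)
    | .inl (e, true) => .inr (R e)
    | .inr (w, _) => w
  let R2 : E2 → ι₁ ⊕ ι₂ := fun e' =>
    match e' with
    | .inl (e, false) => .inr (R e)
    | .inl (e, true) => .inl (L e)
    | .inr (w, _) => w
  let A2 : Finset E2 :=
    A.image (fun e => .inl (e, false)) ∪ A.image (fun e => .inl (e, true)) ∪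
      Finset.univ.biUnion (fun w => (Finset.range (k - deg2 w)).image fun j => .inr (w, j))
  have memA2_inl : ∀ (e : E) (b : Bool), (Sum.inl (e, b) : E2) ∈ A2 ↔ e ∈ A := by
    intro e b
    cases b <;> simp [A2]
  have memA2_inr : ∀ (w : ι₁ ⊕ ι₂) (j : ℕ), (Sum.inr (w, j) : E2) ∈ A2 ↔ j < k - deg2 w := by
    intro w j
    simp [A2]
  have deg2_le : ∀ w, deg2 w ≤ k := by
    rintro (x | y)
    · exact hL x
    · exact hR y
  have cardL : ∀ w, (A2.filter fun e' => L2 e' = w).card = k := by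
    intro w
    have hsplit : (A2.filter fun e' => L2 e' = w) =
        ((A.filter fun e => (Sum.inl (L e) : ι₁ ⊕ ι₂) = w).image (fun e => (Sum.inl (e, false) : E2))) ∪
        (((A.filter fun e => (Sum.inr (R e) : ι₁ ⊕ ι₂) = w).image (fun e => (Sum.inl (e, true) : E2))) ∪
        ((Finset.range (k - deg2 w)).image fun j => (Sum.inr (w, j) : E2))) := by
      ext e'
      rcases e' with ⟨e, b⟩ | ⟨w', j⟩
      · cases b <;> simp [L2, mem_filter, memA2_inl, mem_union, mem_image, memA2_inr] <;> aesop
      · simp [L2, mem_filter, memA2_inl, mem_union, mem_image, memA2_inr] <;> aesop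
    rw [hsplit]
    rw [card_union_of_disjoint, card_union_of_disjoint]
    · rw [card_image_of_injective _ (by intro a b h; injection h with h; simpa using h),
        card_image_of_injective _ (by intro a b h; injection h with h; simpa using h),
        card_image_of_injective _ (by intro a b h; injection h with h; simpa using h),
        card_range]
      rcases w with x | y
      · have h2 : (A.filter fun e => (Sum.inr (R e) : ι₁ ⊕ ι₂) = Sum.inl x) = ∅ := by
          apply filter_false_of_mem; intro e _; simp
        have h1 : (A.filter fun e => (Sum.inl (L e) : ι₁ ⊕ ι₂) = Sum.inl x)
            = (A.filter fun e => L e = x) := by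
          apply filter_congr; intro e _; simp
        rw [h1, h2]
        have := hL x
        simp [deg2]
        omega
      · have h1 : (A.filter fun e => (Sum.inl (L e) : ι₁ ⊕ ι₂) = Sum.inr y) = ∅ := by
          apply filter_false_of_mem; intro e _; simp
        have h2 : (A.filter fun e => (Sum.inr (R e) : ι₁ ⊕ ι₂) = Sum.inr y)
            = (A.filter fun e => R e = y) := by
          apply filter_congr; intro e _; simp
        rw [h1, h2]
        have := hR y
        simp [deg2]
        omega
    · -- disjoint inner
      simp only [disjoint_left]
      rintro e' h1 h2
      simp only [mem_image] at h1 h2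
      obtain ⟨a, _, rfl⟩ := h1
      obtain ⟨b, _, h⟩ := h2
      simp at h
    · -- disjoint outer
      simp only [disjoint_left]
      rintro e' h1 h2
      simp only [mem_union, mem_image] at h1 h2
      obtain ⟨a, _, rfl⟩ := h1
      rcases h2 with ⟨b, _, h⟩ | ⟨b, _, h⟩ <;> simp at h
  
  have cardR : ∀ w, (A2.filter fun e' => R2 e' = w).card = k := by
    intro w
    have hsplit : (A2.filter fun e' => R2 e' = w) =
        ((A.filter fun e => (Sum.inl (L e) : ι₁ ⊕ ι₂) = w).image (fun e => (Sum.inl (e, true) : E2))) ∪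
        (((A.filter fun e => (Sum.inr (R e) : ι₁ ⊕ ι₂) = w).image (fun e => (Sum.inl (e, false) : E2))) ∪
        ((Finset.range (k - deg2 w)).image fun j => (Sum.inr (w, j) : E2))) := by
      ext e'
      rcases e' with ⟨e, b⟩ | ⟨w', j⟩
      · cases b <;> simp [R2, mem_filter, memA2_inl, mem_union, mem_image, memA2_inr] <;> aesop
      · simp [R2, mem_filter, memA2_inl, mem_union, mem_image, memA2_inr] <;> aesop
    rw [hsplit]
    rw [card_union_of_disjoint, card_union_of_disjoint]
    · rw [card_image_of_injective _ (by intro a b h; injection h with h; simpa using h),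
        card_image_of_injective _ (by intro a b h; injection h with h; simpa using h),
        card_image_of_injective _ (by intro a b h; injection h with h; simpa using h),
        card_range]
      rcases w with x | y
      · have h2 : (A.filter fun e => (Sum.inr (R e) : ι₁ ⊕ ι₂) = Sum.inl x) = ∅ := by
          apply filter_false_of_mem; intro e _; simp
        have h1 : (A.filter fun e => (Sum.inl (L e) : ι₁ ⊕ ι₂) = Sum.inl x)
            = (A.filter fun e => L e = x) := by
          apply filter_congr; intro e _; simp
        rw [h1, h2]
        have := hL x
        simp [deg2]
        omega
      · have h1 : (A.filter fun e => (Sum.inl (L e) : ι₁ ⊕ ι₂) = Sum.inr y) = ∅ := by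
          apply filter_false_of_mem; intro e _; simp
        have h2 : (A.filter fun e => (Sum.inr (R e) : ι₁ ⊕ ι₂) = Sum.inr y)
            = (A.filter fun e => R e = y) := by
          apply filter_congr; intro e _; simp
        rw [h1, h2]
        have := hR y
        simp [deg2]
        omega
    · simp only [disjoint_left]
      rintro e' h1 h2
      simp only [mem_image] at h1 h2
      obtain ⟨a, _, rfl⟩ := h1
      obtain ⟨b, _, h⟩ := h2
      simp at h
    · simp only [disjoint_left]
      rintro e' h1 h2
      simp only [mem_union, mem_image] at h1 h2
      obtain ⟨a, _, rfl⟩ := h1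
      rcases h2 with ⟨b, _, h⟩ | ⟨b, _, h⟩ <;> simp at h
  -- Hall's condition
  have hall : ∀ s : Finset (ι₁ ⊕ ι₂),
      s.card ≤ (s.biUnion fun w => (A2.filter fun e' => L2 e' = w).image R2).card := by
    intro s
    set Es := s.biUnion fun w => A2.filter fun e' => L2 e' = w with hEs
    have hEscard : Es.card = k * s.card := by
      rw [card_biUnion]
      · rw [Finset.sum_congr rfl (fun w _ => cardL w), Finset.sum_const, smul_eq_mul, mul_comm]
      · intro w₁ _ w₂ _ hne
        simp only [disjoint_left, mem_filter]
        rintro e' ⟨_, h1⟩ ⟨_, h2⟩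
        exact hne (h1 ▸ h2)
    have hmaps : ∀ e' ∈ Es, R2 e' ∈ s.biUnion fun w => (A2.filter fun e' => L2 e' = w).image R2 := by
      intro e' he'
      simp only [hEs, mem_biUnion] at he' ⊢
      obtain ⟨w, hw, he'⟩ := he'
      exact ⟨w, hw, mem_image_of_mem _ he'⟩
    have hfib : ∀ y ∈ s.biUnion fun w => (A2.filter fun e' => L2 e' = w).image R2,
        (Es.filter fun e' => R2 e' = y).card ≤ k := by
      intro y _
      refine le_trans (card_le_card ?_) (le_of_eq (cardR y))
      intro e' he'
      simp only [mem_filter, hEs, mem_biUnion] at he' ⊢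
      exact ⟨(he'.1.choose_spec.2).1, he'.2⟩
    have := Finset.card_le_mul_card_image_of_maps_to hmaps k hfib
    rw [hEscard] at this
    exact Nat.le_of_mul_le_mul_left this hk
  obtain ⟨g, hginj, hg⟩ := (Finset.all_card_le_biUnion_card_iff_exists_injective
    (fun w => (A2.filter fun e' => L2 e' = w).image R2)).mp hall
  have hgedge : ∀ w, ∃ e', e' ∈ A2 ∧ L2 e' = w ∧ R2 e' = g w := by
    intro w
    have := hg w
    simp only [mem_image, mem_filter] at this
    obtain ⟨e', ⟨h1, h2⟩, h3⟩ := this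
    exact ⟨e', h1, h2, h3⟩
  choose m hm1 hm2 hm3 using hgedge
  have gsurj : Function.Surjective g := Finite.surjective_of_injective hginj
  refine ⟨A.filter (fun e => ∃ w, m w = Sum.inl (e, false)), filter_subset _ _, ?_, ?_, ?_⟩
  · rintro e₁ he₁ e₂ he₂ hne
    simp only [mem_filter] at he₁ he₂
    obtain ⟨w₁, hw₁⟩ := he₁.2
    obtain ⟨w₂, hw₂⟩ := he₂.2
    constructor
    · intro hLe
      have h1 : w₁ = Sum.inl (L e₁) := by rw [← hm2 w₁, hw₁]
      have h2 : w₂ = Sum.inl (L e₂) := by rw [← hm2 w₂, hw₂]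
      have : w₁ = w₂ := by rw [h1, h2, hLe]
      rw [this, hw₂] at hw₁
      exact hne (by
        have := congrArg (fun z => match z with
          | (Sum.inl p : (E × Bool) ⊕ ((ι₁ ⊕ ι₂) × ℕ)) => p.1
          | Sum.inr _ => e₁) hw₁
        simpa using this.symm)
    · intro hRe
      have h1 : g w₁ = Sum.inr (R e₁) := by rw [← hm3 w₁, hw₁]
      have h2 : g w₂ = Sum.inr (R e₂) := by rw [← hm3 w₂, hw₂]
      have : g w₁ = g w₂ := by rw [h1, h2, hRe]
      have : w₁ = w₂ := hginj this
      rw [this, hw₂] at hw₁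
      exact hne (by
        have := congrArg (fun z => match z with
          | (Sum.inl p : (E × Bool) ⊕ ((ι₁ ⊕ ι₂) × ℕ)) => p.1
          | Sum.inr _ => e₁) hw₁
        simpa using this.symm)
  · intro x hx
    have hA2 := hm1 (Sum.inl x)
    have hL2 := hm2 (Sum.inl x)
    rcases hme : m (Sum.inl x) with ⟨e, b⟩ | ⟨w', j⟩
    · cases b
      · have heA : e ∈ A := (memA2_inl e false).mp (hme ▸ hA2)
        have : L e = x := by
          rw [hme] at hL2
          simpa [L2] using hL2
        exact ⟨e, mem_filter.mpr ⟨heA, Sum.inl x, hme⟩, this⟩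
      · rw [hme] at hL2
        simp [L2] at hL2
    · rw [hme] at hL2 hA2
      simp only [L2] at hL2
      rw [(memA2_inr w' j)] at hA2
      rw [hL2] at hA2
      have : deg2 (Sum.inl x) = k := hx
      omega
  · intro y hy
    obtain ⟨w, hw⟩ := gsurj (Sum.inr y)
    have hA2 := hm1 w
    have hR2 := hm3 w
    rw [hw] at hR2
    rcases hme : m w with ⟨e, b⟩ | ⟨w', j⟩
    · cases b
      · have heA : e ∈ A := (memA2_inl e false).mp (hme ▸ hA2)
        have : R e = y := by
          rw [hme] at hR2
          simpa [R2] using hR2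
        exact ⟨e, mem_filter.mpr ⟨heA, w, hme⟩, this⟩
      · rw [hme] at hR2
        simp [R2] at hR2
    · rw [hme] at hR2 hA2
      simp only [R2] at hR2
      rw [(memA2_inr w' j)] at hA2
      rw [hR2] at hA2
      have : deg2 (Sum.inr y) = k := hy
      omega

lemma konigLR [Fintype ι₁] [Fintype ι₂] (L : E → ι₁) (R : E → ι₂) (k : ℕ) :
    ∀ A : Finset E, (∀ x, (A.filter fun e => L e = x).card ≤ k) →
    (∀ y, (A.filter fun e => R e = y).card ≤ k) →
    ∃ c : E → ℕ, (∀ e ∈ A, c e < k) ∧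
      ∀ e₁ ∈ A, ∀ e₂ ∈ A, e₁ ≠ e₂ → (L e₁ = L e₂ ∨ R e₁ = R e₂) → c e₁ ≠ c e₂ := by
  induction k with
  | zero =>
    intro A hL _
    have hA : A = ∅ := by
      by_contra h
      obtain ⟨e, he⟩ := Finset.nonempty_iff_ne_empty.mpr h
      have : e ∈ A.filter fun e' => L e' = L e := mem_filter.mpr ⟨he, rfl⟩
      have := card_pos.mpr ⟨e, this⟩
      have := hL (L e)
      omega
    exact ⟨fun _ => 0, by simp [hA], by simp [hA]⟩
  | succ k ih =>
    intro A hL hR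
    obtain ⟨M, hMA, hMadj, hMx, hMy⟩ := konigCover L R A (k + 1) (Nat.succ_pos k) hL hR
    have hL' : ∀ x, ((A \ M).filter fun e => L e = x).card ≤ k := by
      intro x
      by_cases hx : (A.filter fun e => L e = x).card = k + 1
      · obtain ⟨e, heM, heL⟩ := hMx x hx
        have hsub : ((A \ M).filter fun e => L e = x) ⊆ (A.filter fun e => L e = x).erase e := by
          intro e' he'
          simp only [mem_filter, mem_sdiff] at he'
          refine mem_erase.mpr ⟨fun h => he'.1.2 (h ▸ heM), mem_filter.mpr ⟨he'.1.1, he'.2⟩⟩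
        have := card_le_card hsub
        rw [card_erase_of_mem (mem_filter.mpr ⟨hMA heM, heL⟩), hx] at this
        omega
      · have hsub : ((A \ M).filter fun e => L e = x) ⊆ (A.filter fun e => L e = x) :=
          filter_subset_filter _ (sdiff_subset)
        have := card_le_card hsub
        have := hL x
        omega
    have hR' : ∀ y, ((A \ M).filter fun e => R e = y).card ≤ k := by
      intro y
      by_cases hy : (A.filter fun e => R e = y).card = k + 1
      · obtain ⟨e, heM, heR⟩ := hMy y hy
        have hsub : ((A \ M).filter fun e => R e = y) ⊆ (A.filter fun e => R e = y).erase e := by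
          intro e' he'
          simp only [mem_filter, mem_sdiff] at he'
          refine mem_erase.mpr ⟨fun h => he'.1.2 (h ▸ heM), mem_filter.mpr ⟨he'.1.1, he'.2⟩⟩
        have := card_le_card hsub
        rw [card_erase_of_mem (mem_filter.mpr ⟨hMA heM, heR⟩), hy] at this
        omega
      · have hsub : ((A \ M).filter fun e => R e = y) ⊆ (A.filter fun e => R e = y) :=
          filter_subset_filter _ (sdiff_subset)
        have := card_le_card hsub
        have := hR y
        omega
    obtain ⟨c, hc1, hc2⟩ := ih (A \ M) hL' hR'
    classical
    refine ⟨fun e => if e ∈ M then k else c e, ?_, ?_⟩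
    · intro e he
      by_cases h : e ∈ M <;> simp only [h, if_true, if_false, if_pos, if_neg, not_false_iff]
      · omega
      · have := hc1 e (mem_sdiff.mpr ⟨he, h⟩); omega
    · intro e₁ he₁ e₂ he₂ hne hadj
      by_cases h1 : e₁ ∈ M <;> by_cases h2 : e₂ ∈ M
      · rcases hadj with h | h
        · exact absurd h (hMadj e₁ h1 e₂ h2 hne).1
        · exact absurd h (hMadj e₁ h1 e₂ h2 hne).2
      · have := hc1 e₂ (mem_sdiff.mpr ⟨he₂, h2⟩)
        simp only [h1, h2, if_true, if_false]
        omega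
      · have := hc1 e₁ (mem_sdiff.mpr ⟨he₁, h1⟩)
        simp only [h1, h2, if_true, if_false]
        omega
      · simp only [h1, h2, if_false]
        exact hc2 e₁ (mem_sdiff.mpr ⟨he₁, h1⟩) e₂ (mem_sdiff.mpr ⟨he₂, h2⟩) hne hadj

end KonigLR

def rIdx {E ι : Type*} [DecidableEq ι] (P : E → ι) (enc : E → ℕ) (D : Finset E) (e : E) : ℕ :=
  ((D.filter fun e' => P e' = P e).filter fun e' => enc e' < enc e).card

lemma rIdx_lt {E ι : Type*} [DecidableEq ι] (P : E → ι) (enc : E → ℕ) (D : Finset E) (e : E)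
    (he : e ∈ D) : rIdx P enc D e < (D.filter fun e' => P e' = P e).card := by
  classical
  have hsub : ((D.filter fun e' => P e' = P e).filter fun e' => enc e' < enc e) ⊆
      (D.filter fun e' => P e' = P e).erase e := by
    intro e' h
    simp only [mem_filter, mem_erase] at h ⊢
    refine ⟨fun heq => ?_, h.1⟩
    rw [heq] at h
    exact absurd h.2 (lt_irrefl _)
  have h1 := card_le_card hsub
  have h2 : e ∈ D.filter fun e' => P e' = P e := mem_filter.mpr ⟨he, rfl⟩
  have h3 := card_erase_of_mem h2
  have h4 := card_pos.mpr ⟨e, h2⟩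
  unfold rIdx
  omega

lemma rIdx_inj {E ι : Type*} [DecidableEq ι] (P : E → ι) (enc : E → ℕ)
    (henc : Function.Injective enc) (D : Finset E) (e₁ e₂ : E)
    (h1 : e₁ ∈ D) (h2 : e₂ ∈ D) (hP : P e₁ = P e₂)
    (heq : rIdx P enc D e₁ = rIdx P enc D e₂) : e₁ = e₂ := by
  classical
  have key : ∀ a b : E, a ∈ D → P a = P b → enc a < enc b →
      rIdx P enc D a < rIdx P enc D b := by
    intro a b ha hPab hlt
    unfold rIdx
    have hfib : (D.filter fun e' => P e' = P a) = D.filter fun e' => P e' = P b := by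
      rw [hPab]
    rw [hfib]
    apply card_lt_card
    constructor
    · intro e' h
      simp only [mem_filter] at h ⊢
      exact ⟨h.1, by omega⟩
    · intro hsup
      have ha' : a ∈ (D.filter fun e' => P e' = P b).filter fun e' => enc e' < enc b := by
        simp only [mem_filter]
        exact ⟨⟨ha, hPab⟩, hlt⟩
      have := hsup ha'
      simp only [mem_filter] at this
      omega
  rcases lt_trichotomy (enc e₁) (enc e₂) with h | h | h
  · exact absurd heq (Nat.ne_of_lt (key e₁ e₂ h1 hP h))
  · exact henc h
  · exact absurd heq.symm (Nat.ne_of_lt (key e₂ e₁ h2 hP.symm h))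

lemma balanceAux {E ι : Type*} [DecidableEq ι] (P : E → ι) (enc : E → ℕ)
    (D CC : Finset E) (hCC : CC ⊆ D)
    (hdiff : ∀ e₁ ∈ CC, ∀ e₂ ∈ CC, e₁ ≠ e₂ → P e₁ = P e₂ →
      rIdx P enc D e₁ / 2 ≠ rIdx P enc D e₂ / 2)
    (x : ι) :
    2 * (CC.filter fun e => P e = x).card ≤ (D.filter fun e => P e = x).card + 1 := by
  classical
  set d := (D.filter fun e => P e = x).card with hd
  have hcard : (CC.filter fun e => P e = x).card ≤ (d + 1) / 2 := by
    rw [← Finset.card_range ((d + 1) / 2)]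
    apply card_le_card_of_injOn (fun e => rIdx P enc D e / 2)
    · intro e he
      simp only [mem_filter, mem_coe] at he ⊢
      rw [mem_range]
      have h1 : rIdx P enc D e < d := by
        have := rIdx_lt P enc D e (hCC he.1)
        rw [show (D.filter fun e' => P e' = P e) = D.filter fun e' => P e' = x from by
          rw [he.2]] at this
        omega
      omega
    · intro e₁ h1 e₂ h2 heq
      by_contra hne
      simp only [coe_filter, Set.mem_setOf_eq] at h1 h2
      exact hdiff e₁ h1.1 e₂ h2.1 hne (h1.2.trans h2.2.symm) heq
  omega

set_option maxHeartbeats 2000000 in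
lemma eulerSplit {E ι₁ ι₂ : Type*} [DecidableEq E] [DecidableEq ι₁] [DecidableEq ι₂]
    [Fintype E] [Fintype ι₁] [Fintype ι₂] (L : E → ι₁) (R : E → ι₂) (D : Finset E) :
    ∃ C ⊆ D,
      (∀ x, 2 * (C.filter fun e => L e = x).card ≤ (D.filter fun e => L e = x).card + 1 ∧
            2 * ((D \ C).filter fun e => L e = x).card ≤ (D.filter fun e => L e = x).card + 1) ∧
      (∀ y, 2 * (C.filter fun e => R e = y).card ≤ (D.filter fun e => R e = y).card + 1 ∧
            2 * ((D \ C).filter fun e => R e = y).card ≤ (D.filter fun e => R e = y).card + 1) := by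
  classical
  set N := Fintype.card E with hN
  let enc : E → ℕ := fun e => ((Fintype.equivFin E) e : ℕ)
  have henc : Function.Injective enc := by
    intro a b h
    exact (Fintype.equivFin E).injective (Fin.ext h)
  have hbndL : ∀ (P : E → ι₁) (e : E), rIdx P enc D e / 2 < N + 1 := by
    intro P e
    have h1 : rIdx P enc D e ≤ N := by
      unfold rIdx
      calc ((D.filter fun e' => P e' = P e).filter fun e' => enc e' < enc e).card
          ≤ D.card := le_trans (card_filter_le _ _) (card_filter_le _ _)
        _ ≤ N := hN ▸ card_le_univ D
    omega
  have hbndR : ∀ (P : E → ι₂) (e : E), rIdx P enc D e / 2 < N + 1 := by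
    intro P e
    have h1 : rIdx P enc D e ≤ N := by
      unfold rIdx
      calc ((D.filter fun e' => P e' = P e).filter fun e' => enc e' < enc e).card
          ≤ D.card := le_trans (card_filter_le _ _) (card_filter_le _ _)
        _ ≤ N := hN ▸ card_le_univ D
    omega
  let L' : E → ι₁ × Fin (N + 1) := fun e => (L e, ⟨rIdx L enc D e / 2, hbndL L e⟩)
  let R' : E → ι₂ × Fin (N + 1) := fun e => (R e, ⟨rIdx R enc D e / 2, hbndR R e⟩)
  have hfibL : ∀ (P : E → ι₁)
      (P' : E → ι₁ × Fin (N + 1))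
      (_ : ∀ e, (P' e).1 = P e ∧ ((P' e).2 : ℕ) = rIdx P enc D e / 2)
      (p : ι₁ × Fin (N + 1)), (D.filter fun e => P' e = p).card ≤ 2 := by
    intro P P' hP' p
    rcases p with ⟨x, j⟩
    have h2 : ({2 * (j : ℕ), 2 * (j : ℕ) + 1} : Finset ℕ).card ≤ 2 :=
      le_trans (card_insert_le _ _) (by simp)
    refine le_trans (card_le_card_of_injOn (fun e => rIdx P enc D e) ?_ ?_) h2
    · intro e he
      simp only [mem_filter, mem_coe] at he
      have hval : rIdx P enc D e / 2 = (j : ℕ) := by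
        rw [← (hP' e).2, he.2]
      simp only [mem_insert, mem_singleton, mem_coe]
      omega
    · intro e₁ h1 e₂ h2 heq
      simp only [coe_filter, Set.mem_setOf_eq] at h1 h2
      have hfst : P e₁ = P e₂ := by
        rw [← (hP' e₁).1, ← (hP' e₂).1, h1.2, h2.2]
      exact rIdx_inj P enc henc D e₁ e₂ h1.1 h2.1 hfst heq
  have hfibR : ∀ (P : E → ι₂)
      (P' : E → ι₂ × Fin (N + 1))
      (_ : ∀ e, (P' e).1 = P e ∧ ((P' e).2 : ℕ) = rIdx P enc D e / 2)
      (p : ι₂ × Fin (N + 1)), (D.filter fun e => P' e = p).card ≤ 2 := by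
    intro P P' hP' p
    rcases p with ⟨x, j⟩
    have h2 : ({2 * (j : ℕ), 2 * (j : ℕ) + 1} : Finset ℕ).card ≤ 2 :=
      le_trans (card_insert_le _ _) (by simp)
    refine le_trans (card_le_card_of_injOn (fun e => rIdx P enc D e) ?_ ?_) h2
    · intro e he
      simp only [mem_filter, mem_coe] at he
      have hval : rIdx P enc D e / 2 = (j : ℕ) := by
        rw [← (hP' e).2, he.2]
      simp only [mem_insert, mem_singleton, mem_coe]
      omega
    · intro e₁ h1 e₂ h2 heq
      simp only [coe_filter, Set.mem_setOf_eq] at h1 h2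
      have hfst : P e₁ = P e₂ := by
        rw [← (hP' e₁).1, ← (hP' e₂).1, h1.2, h2.2]
      exact rIdx_inj P enc henc D e₁ e₂ h1.1 h2.1 hfst heq
  obtain ⟨c, hc1, hc2⟩ := konigLR L' R' 2 D
    (hfibL L L' (fun _ => ⟨rfl, rfl⟩)) (hfibR R R' (fun _ => ⟨rfl, rfl⟩))
  set C := D.filter fun e => c e = 0 with hC
  have hCD : C ⊆ D := filter_subset _ _
  have hsame : ∀ e₁ ∈ C, ∀ e₂ ∈ C, c e₁ = c e₂ := by
    intro e₁ h1 e₂ h2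
    simp only [hC, mem_filter] at h1 h2
    rw [h1.2, h2.2]
  have hsame' : ∀ e₁ ∈ D \ C, ∀ e₂ ∈ D \ C, c e₁ = c e₂ := by
    intro e₁ h1 e₂ h2
    simp only [hC, mem_sdiff, mem_filter] at h1 h2
    have b1 := hc1 e₁ h1.1
    have b2' := hc1 e₂ h2.1
    have n1 : c e₁ ≠ 0 := fun h => h1.2 ⟨h1.1, h⟩
    have n2 : c e₂ ≠ 0 := fun h => h2.2 ⟨h2.1, h⟩
    omega
  have key : ∀ CC : Finset E, CC ⊆ D → (∀ e₁ ∈ CC, ∀ e₂ ∈ CC, c e₁ = c e₂) →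
      (∀ x, 2 * (CC.filter fun e => L e = x).card ≤ (D.filter fun e => L e = x).card + 1) ∧
      (∀ y, 2 * (CC.filter fun e => R e = y).card ≤ (D.filter fun e => R e = y).card + 1) := by
    intro CC hsub hcol
    constructor
    · intro x
      apply balanceAux L enc D CC hsub
      intro e₁ h1 e₂ h2 hne hP hidx
      have : L' e₁ = L' e₂ := by
        simp only [L', Prod.ext_iff, Fin.ext_iff]
        exact ⟨hP, hidx⟩
      exact hc2 e₁ (hsub h1) e₂ (hsub h2) hne (Or.inl this) (hcol e₁ h1 e₂ h2)
    · intro y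
      apply balanceAux R enc D CC hsub
      intro e₁ h1 e₂ h2 hne hP hidx
      have : R' e₁ = R' e₂ := by
        simp only [R', Prod.ext_iff, Fin.ext_iff]
        exact ⟨hP, hidx⟩
      exact hc2 e₁ (hsub h1) e₂ (hsub h2) hne (Or.inr this) (hcol e₁ h1 e₂ h2)
  obtain ⟨kC1, kC2⟩ := key C hCD hsame
  obtain ⟨kD1, kD2⟩ := key (D \ C) sdiff_subset hsame'
  exact ⟨C, hCD, fun x => ⟨kC1 x, kD1 x⟩, fun y => ⟨kC2 y, kD2 y⟩⟩


variable {V E : Type*}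

/-- Degree of vertex `v` in the edge set `A` of a multigraph given by `ends`. -/
def degIn [DecidableEq V] (ends : E → Sym2 V) (A : Finset E) (v : V) : ℕ :=
  (A.filter (fun e => v ∈ ends e)).card

/-- The edge set `A` admits a proper edge coloring with at most `k` colors:
adjacent (distinct, sharing an endpoint) edges get different colors. -/
def EdgeColorable (ends : E → Sym2 V) (A : Finset E) (k : ℕ) : Prop :=
  ∃ c : E → ℕ, (∀ e ∈ A, c e < k) ∧
    ∀ e₁ ∈ A, ∀ e₂ ∈ A, e₁ ≠ e₂ → (∃ v, v ∈ ends e₁ ∧ v ∈ ends e₂) → c e₁ ≠ c e₂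

/-- `ν_k`: the maximum number of edges of a `k`-edge-colorable subgraph whose
edge set lies in `ground`. -/
noncomputable def nu (ends : E → Sym2 V) (ground : Finset E) (k : ℕ) : ℕ :=
  sSup {n | ∃ F : Finset E, F ⊆ ground ∧ EdgeColorable ends F k ∧ F.card = n}

/-- The multigraph given by `ends` is bipartite. -/
def IsBipartite (ends : E → Sym2 V) : Prop :=
  ∃ f : V → Bool, ∀ e : E, ∀ u v : V, ends e = s(u, v) → f u ≠ f v

/-- There is an `A`-augmenting path: a simple path of odd length whose
odd-numbered (1st, 3rd, ...) edges lie outside `A`, whose even-numbered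
(2nd, 4th, ...) edges belong to `A`, and whose endpoints have degree
at most `k - 1` in `A`. -/
def IsAugPath [DecidableEq V] (ends : E → Sym2 V) (A : Finset E) (k : ℕ) : Prop :=
  ∃ (m : ℕ) (vs : Fin (m + 1) → V) (es : Fin m → E),
    Odd m ∧ Function.Injective vs ∧
    (∀ i : Fin m, ends (es i) = s(vs i.castSucc, vs i.succ)) ∧
    (∀ i : Fin m, (i : ℕ) % 2 = 0 → es i ∉ A) ∧
    (∀ i : Fin m, (i : ℕ) % 2 = 1 → es i ∈ A) ∧
    degIn ends A (vs 0) ≤ k - 1 ∧ degIn ends A (vs (Fin.last m)) ≤ k - 1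


lemma edgeColorable_empty' (ends : E → Sym2 V) (k : ℕ) : EdgeColorable ends ∅ k :=
  ⟨fun _ => 0, fun e he => absurd he (Finset.notMem_empty e),
    fun e he => absurd he (Finset.notMem_empty e)⟩

lemma nu_bddAbove' [Fintype E] (ends : E → Sym2 V) (k : ℕ) :
    BddAbove {n | ∃ F : Finset E, F ⊆ Finset.univ ∧ EdgeColorable ends F k ∧ F.card = n} := by
  refine ⟨Fintype.card E, ?_⟩
  rintro n ⟨F, -, -, rfl⟩
  exact Finset.card_le_univ F

lemma nu_mem' [Fintype E] (ends : E → Sym2 V) (k : ℕ) :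
    ∃ F : Finset E, F ⊆ Finset.univ ∧ EdgeColorable ends F k ∧
      F.card = nu ends Finset.univ k := by
  have hne : {n | ∃ F : Finset E, F ⊆ Finset.univ ∧ EdgeColorable ends F k ∧
      F.card = n}.Nonempty := ⟨0, ∅, Finset.empty_subset _, edgeColorable_empty' ends k, rfl⟩
  exact Nat.sSup_mem hne (nu_bddAbove' ends k)

lemma le_nu [Fintype E] (ends : E → Sym2 V) (k : ℕ) (F : Finset E)
    (hF : EdgeColorable ends F k) : F.card ≤ nu ends Finset.univ k :=
  le_csSup (nu_bddAbove' ends k) ⟨F, Finset.subset_univ F, hF, rfl⟩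

lemma degIn_le_of_colorable' [DecidableEq V] (ends : E → Sym2 V) (A : Finset E) (k : ℕ)
    (h : EdgeColorable ends A k) (v : V) : degIn ends A v ≤ k := by
  obtain ⟨c, hc1, hc2⟩ := h
  unfold degIn
  rw [← Finset.card_range k]
  apply Finset.card_le_card_of_injOn c
  · intro e he
    simp only [Finset.mem_filter, Finset.mem_coe] at he
    exact Finset.mem_range.mpr (hc1 e he.1)
  · intro e₁ h1 e₂ h2 heq
    by_contra hne
    simp only [Finset.coe_filter, Set.mem_setOf_eq] at h1 h2
    exact hc2 e₁ h1.1 e₂ h2.1 hne ⟨v, h1.2, h2.2⟩ heq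

/-- For a finite bipartite loopless multigraph `G`, `k ≥ 0` and `0 ≤ i ≤ k`:
`2 ν_k(G) ≥ ν_{k-i}(G) + ν_{k+i}(G)`. -/
theorem stmt_10 [Fintype V] [Fintype E] [DecidableEq V] (ends : E → Sym2 V)
    (hloop : ∀ e : E, ¬ (ends e).IsDiag) (hbip : IsBipartite ends)
    (k i : ℕ) (hik : i ≤ k) :
    2 * nu ends (Finset.univ : Finset E) k ≥
      nu ends (Finset.univ : Finset E) (k - i) +
        nu ends (Finset.univ : Finset E) (k + i) := by
  classical
  obtain ⟨f, hf⟩ := hbip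
  have hsd : ∀ e : E, ∃ q : V × V, ends e = s(q.1, q.2) ∧ f q.1 = false ∧ f q.2 = true := by
    intro e
    have h2 : ∀ q : Sym2 V, q = ends e →
        ∃ q' : V × V, ends e = s(q'.1, q'.2) ∧ f q'.1 = false ∧ f q'.2 = true := by
      intro q
      refine Sym2.inductionOn q ?_
      intro u v hq
      have hne := hf e u v hq.symm
      cases hu : f u <;> cases hv : f v
      · rw [hu, hv] at hne; exact absurd rfl hne
      · exact ⟨(u, v), hq.symm, hu, hv⟩
      · exact ⟨(v, u), by rw [← hq]; exact Sym2.eq_swap, hv, hu⟩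
      · rw [hu, hv] at hne; exact absurd rfl hne
    exact h2 (ends e) rfl
  choose p hp1 hp2 hp3 using hsd
  have hmem : ∀ (v : V) (e : E), v ∈ ends e ↔ (p e).1 = v ∨ (p e).2 = v := by
    intro v e
    have h1 : v ∈ s((p e).1, (p e).2) ↔ v = (p e).1 ∨ v = (p e).2 := Sym2.mem_iff
    rw [hp1 e, h1]
    constructor
    · rintro (h | h) <;> [exact Or.inl h.symm; exact Or.inr h.symm]
    · rintro (h | h) <;> [exact Or.inl h.symm; exact Or.inr h.symm]
  have hdegIn : ∀ (X : Finset E) (v : V), degIn ends X v =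
      (X.filter fun e => (p e).1 = v).card + (X.filter fun e => (p e).2 = v).card := by
    intro X v
    unfold degIn
    rw [← Finset.card_union_of_disjoint]
    · congr 1
      ext e
      simp only [Finset.mem_filter, Finset.mem_union, hmem v e]
      tauto
    · rw [Finset.disjoint_left]
      rintro e h1 h2
      simp only [Finset.mem_filter] at h1 h2
      have e1 : f v = false := h1.2 ▸ hp2 e
      have e2 : f v = true := h2.2 ▸ hp3 e
      rw [e1] at e2
      exact Bool.noConfusion e2
  have hempty_dst : ∀ (X : Finset E) (v : V), f v = false →
      (X.filter fun e => (p e).2 = v) = ∅ := by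
    intro X v hv
    apply Finset.filter_false_of_mem
    intro e _ h
    have e2 : f v = true := h ▸ hp3 e
    rw [hv] at e2
    exact Bool.noConfusion e2
  have hempty_src : ∀ (X : Finset E) (v : V), f v = true →
      (X.filter fun e => (p e).1 = v) = ∅ := by
    intro X v hv
    apply Finset.filter_false_of_mem
    intro e _ h
    have e2 : f v = false := h ▸ hp2 e
    rw [hv] at e2
    exact Bool.noConfusion e2
  have hkonig : ∀ (X : Finset E) (m : ℕ), (∀ v, degIn ends X v ≤ m) →
      EdgeColorable ends X m := by
    intro X m hX
    have hL : ∀ x, (X.filter fun e => (p e).1 = x).card ≤ m := by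
      intro x
      have h0 := hX x
      rw [hdegIn] at h0
      omega
    have hR : ∀ y, (X.filter fun e => (p e).2 = y).card ≤ m := by
      intro y
      have h0 := hX y
      rw [hdegIn] at h0
      omega
    obtain ⟨c, hc1, hc2⟩ := konigLR (fun e => (p e).1) (fun e => (p e).2) m X hL hR
    refine ⟨c, hc1, ?_⟩
    rintro e₁ h1 e₂ h2 hne ⟨v, hv1, hv2⟩
    apply hc2 e₁ h1 e₂ h2 hne
    rw [hmem] at hv1 hv2
    rcases hv1 with h | h <;> rcases hv2 with h' | h'
    · exact Or.inl (h.trans h'.symm)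
    · exfalso
      have e1 : f v = false := h ▸ hp2 e₁
      have e2 : f v = true := h' ▸ hp3 e₂
      rw [e1] at e2; exact Bool.noConfusion e2
    · exfalso
      have e1 : f v = true := h ▸ hp3 e₁
      have e2 : f v = false := h' ▸ hp2 e₂
      rw [e2] at e1; exact Bool.noConfusion e1
    · exact Or.inr (h.trans h'.symm)
  obtain ⟨A, -, hAcol, hAcard⟩ := nu_mem' ends (k - i)
  obtain ⟨B, -, hBcol, hBcard⟩ := nu_mem' ends (k + i)
  have hAdeg : ∀ v, degIn ends A v ≤ k - i := degIn_le_of_colorable' ends A (k - i) hAcol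
  have hBdeg : ∀ v, degIn ends B v ≤ k + i := degIn_le_of_colorable' ends B (k + i) hBcol
  set S := A ∩ B with hS
  set D := (A ∪ B) \ S with hD
  have hSsub : S ⊆ A ∪ B := le_trans Finset.inter_subset_left Finset.subset_union_left
  obtain ⟨C, hCD, hbalL, hbalR⟩ := eulerSplit (fun e => (p e).1) (fun e => (p e).2) D
  have hCbal : ∀ v, 2 * degIn ends C v ≤ degIn ends D v + 1 ∧
      2 * degIn ends (D \ C) v ≤ degIn ends D v + 1 := by
    intro v
    cases hv : f v
    · have h1 := hempty_dst C v hv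
      have h2 := hempty_dst (D \ C) v hv
      have h3 := hempty_dst D v hv
      rw [hdegIn, hdegIn, hdegIn, h1, h2, h3]
      simp only [Finset.card_empty, add_zero]
      exact hbalL v
    · have h1 := hempty_src C v hv
      have h2 := hempty_src (D \ C) v hv
      have h3 := hempty_src D v hv
      rw [hdegIn, hdegIn, hdegIn, h1, h2, h3]
      simp only [Finset.card_empty, zero_add]
      exact hbalR v
  have hdeg_split : ∀ v, degIn ends D v + degIn ends S v = degIn ends (A ∪ B) v := by
    intro v
    unfold degIn
    have hfe : D.filter (fun e => v ∈ ends e) =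
        ((A ∪ B).filter (fun e => v ∈ ends e)) \ (S.filter (fun e => v ∈ ends e)) := by
      ext e
      simp only [hD, Finset.mem_filter, Finset.mem_sdiff]
      tauto
    rw [hfe]
    exact Finset.card_sdiff_add_card_eq_card
      (Finset.filter_subset_filter _ hSsub)
  have hdeg_ie : ∀ v, degIn ends (A ∪ B) v + degIn ends S v =
      degIn ends A v + degIn ends B v := by
    intro v
    unfold degIn
    rw [hS, Finset.filter_union, Finset.filter_inter_distrib]
    exact Finset.card_union_add_card_inter _ _
  have hSdisjC : Disjoint S C :=
    (Finset.sdiff_disjoint.mono_left hCD).symm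
  have hSdisjDC : Disjoint S (D \ C) :=
    (Finset.sdiff_disjoint.mono_left Finset.sdiff_subset).symm
  have hsum_le : ∀ (X Y : Finset E) (v : V), degIn ends (X ∪ Y) v ≤
      degIn ends X v + degIn ends Y v := by
    intro X Y v
    unfold degIn
    rw [Finset.filter_union]
    exact Finset.card_union_le _ _
  have hG1deg : ∀ v, degIn ends (S ∪ C) v ≤ k := by
    intro v
    have h1 := hsum_le S C v
    have h2 := (hCbal v).1
    have h3 := hdeg_split v
    have h4 := hdeg_ie v
    have h5 := hAdeg v
    have h6 := hBdeg v
    omega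
  have hG2deg : ∀ v, degIn ends (S ∪ (D \ C)) v ≤ k := by
    intro v
    have h1 := hsum_le S (D \ C) v
    have h2 := (hCbal v).2
    have h3 := hdeg_split v
    have h4 := hdeg_ie v
    have h5 := hAdeg v
    have h6 := hBdeg v
    omega
  have hle1 := le_nu ends k (S ∪ C) (hkonig _ k hG1deg)
  have hle2 := le_nu ends k (S ∪ (D \ C)) (hkonig _ k hG2deg)
  have hc1 : (S ∪ C).card = S.card + C.card := Finset.card_union_of_disjoint hSdisjC
  have hc2 : (S ∪ (D \ C)).card = S.card + (D \ C).card :=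
    Finset.card_union_of_disjoint hSdisjDC
  have hc3 : (D \ C).card + C.card = D.card := Finset.card_sdiff_add_card_eq_card hCD
  have hc4 : D.card + S.card = (A ∪ B).card := Finset.card_sdiff_add_card_eq_card hSsub
  have hc5 : (A ∪ B).card + S.card = A.card + B.card := by
    rw [hS]; exact Finset.card_union_add_card_inter _ _
  rw [ge_iff_le, ← hAcard, ← hBcard]
  omega
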